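/- Let S ≥ 1, let Q be an S×S row-stochastic real matrix, α ∈ (0,1), let c ∈ ℝ^S be nonnegative with ‖c‖_∞ > 0, let v = (1−α)(I − αQ)^{-1} c, and let ε ∈ (0, 4‖c‖_∞) and δ ∈ (0,1). On a probability space, for each state s let Y_{s,1}, …, Y_{s,n} be i.i.d. Fin S-valued random variables with ℙ(Y_{s,i} = s') = Q(s,s'), independent across different s. Define the empirical matrix Q̃ by Q̃(s,s') = (1/n) Σ_{i=1}^n 1(Y_{s,i} = s'), and let ṽ = (1−α)(I − αQ̃)^{-1} c. If n ≥ (2 ‖c‖_∞^2 α^2 / (ε^2 (1−α)^2)) · log( (2S/δ) · ⌈log(4‖c‖_∞/ε)/(1−α)⌉ ), then ℙ( ‖ṽ − v‖_∞ ≥ ε ) ≤ δ. -/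

import Mathlib

open MeasureTheory ProbabilityTheory


section LinAlg
variable {S : ℕ}

lemma pi_exists_max (hS : 1 ≤ S) (x : Fin S → ℝ) : ∃ s, ‖x‖ ≤ |x s| := by
  have : Nonempty (Fin S) := ⟨⟨0, hS⟩⟩
  obtain ⟨s, hs⟩ := Finite.exists_max (fun s => |x s|)
  refine ⟨s, (pi_norm_le_iff_of_nonneg (abs_nonneg _)).2 fun i => hs i⟩

lemma stoch_mulVec_norm_le {P : Matrix (Fin S) (Fin S) ℝ}
    (hP0 : ∀ i j, 0 ≤ P i j) (hP1 : ∀ i, ∑ j, P i j = 1) (x : Fin S → ℝ) :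
    ‖P.mulVec x‖ ≤ ‖x‖ := by
  refine (pi_norm_le_iff_of_nonneg (norm_nonneg x)).2 fun i => ?_
  have hxb : ∀ j, |x j| ≤ ‖x‖ := fun j => by
    simpa using norm_le_pi_norm x j
  have : |∑ j, P i j * x j| ≤ ∑ j, P i j * ‖x‖ := by
    refine (Finset.abs_sum_le_sum_abs _ _).trans (Finset.sum_le_sum fun j _ => ?_)
    rw [abs_mul, abs_of_nonneg (hP0 i j)]
    exact mul_le_mul_of_nonneg_left (hxb j) (hP0 i j)
  simpa [Matrix.mulVec, dotProduct, ← Finset.sum_mul, hP1 i] using this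

lemma one_sub_smul_mulVec {P : Matrix (Fin S) (Fin S) ℝ} (α : ℝ) (x : Fin S → ℝ) :
    (1 - α • P).mulVec x = x - α • P.mulVec x := by
  rw [Matrix.sub_mulVec, Matrix.one_mulVec, Matrix.smul_mulVec]

lemma one_sub_smul_lower {P : Matrix (Fin S) (Fin S) ℝ} {α : ℝ}
    (hα : α ∈ Set.Ioo (0:ℝ) 1)
    (hP0 : ∀ i j, 0 ≤ P i j) (hP1 : ∀ i, ∑ j, P i j = 1) (x : Fin S → ℝ) :
    (1 - α) * ‖x‖ ≤ ‖(1 - α • P).mulVec x‖ := by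
  have h1 : ‖x‖ ≤ ‖(1 - α • P).mulVec x‖ + α * ‖x‖ := by
    calc ‖x‖ = ‖(1 - α • P).mulVec x + α • P.mulVec x‖ := by
          rw [one_sub_smul_mulVec, sub_add_cancel]
      _ ≤ ‖(1 - α • P).mulVec x‖ + ‖α • P.mulVec x‖ := norm_add_le _ _
      _ ≤ ‖(1 - α • P).mulVec x‖ + α * ‖x‖ := by
          rw [norm_smul, Real.norm_eq_abs, abs_of_pos hα.1]
          exact add_le_add_right (mul_le_mul_of_nonneg_left
            (stoch_mulVec_norm_le hP0 hP1 x) hα.1.le) _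
  nlinarith [norm_nonneg x]

lemma isUnit_one_sub_smul {P : Matrix (Fin S) (Fin S) ℝ} {α : ℝ}
    (hα : α ∈ Set.Ioo (0:ℝ) 1)
    (hP0 : ∀ i j, 0 ≤ P i j) (hP1 : ∀ i, ∑ j, P i j = 1) :
    IsUnit (1 - α • P) := by
  rw [Matrix.isUnit_iff_isUnit_det, isUnit_iff_ne_zero]
  intro hdet
  obtain ⟨x, hx0, hx⟩ := (Matrix.exists_mulVec_eq_zero_iff).2 hdet
  have := one_sub_smul_lower hα hP0 hP1 x
  rw [hx, norm_zero] at this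
  have hxn : 0 < ‖x‖ := norm_pos_iff.2 hx0
  nlinarith [mul_pos (sub_pos.2 hα.2) hxn]

lemma mulVec_value {P : Matrix (Fin S) (Fin S) ℝ} {α : ℝ}
    (hα : α ∈ Set.Ioo (0:ℝ) 1)
    (hP0 : ∀ i j, 0 ≤ P i j) (hP1 : ∀ i, ∑ j, P i j = 1) (c : Fin S → ℝ) :
    (1 - α • P).mulVec ((1 - α) • (1 - α • P)⁻¹.mulVec c) = (1 - α) • c := by
  rw [Matrix.mulVec_smul, Matrix.mulVec_mulVec,
    Matrix.mul_nonsing_inv _ ((Matrix.isUnit_iff_isUnit_det _).1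
      (isUnit_one_sub_smul hα hP0 hP1)), Matrix.one_mulVec]

end LinAlg

section VBounds
variable {S : ℕ}

lemma v_fixed_point {Q : Matrix (Fin S) (Fin S) ℝ} {α : ℝ} {v c : Fin S → ℝ}
    (hfix : (1 - α • Q).mulVec v = (1 - α) • c) :
    v = (1 - α) • c + α • Q.mulVec v := by
  have := one_sub_smul_mulVec (P := Q) α v
  rw [hfix] at this
  linear_combination (norm := abel) -this

lemma v_norm_le {Q : Matrix (Fin S) (Fin S) ℝ} {α : ℝ} (hα : α ∈ Set.Ioo (0:ℝ) 1)
    (hQ0 : ∀ i j, 0 ≤ Q i j) (hQ1 : ∀ i, ∑ j, Q i j = 1) {v c : Fin S → ℝ}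
    (hfix : (1 - α • Q).mulVec v = (1 - α) • c) : ‖v‖ ≤ ‖c‖ := by
  have h := v_fixed_point hfix
  have : ‖v‖ ≤ (1 - α) * ‖c‖ + α * ‖v‖ := by
    calc ‖v‖ = ‖(1 - α) • c + α • Q.mulVec v‖ := by rw [← h]
      _ ≤ ‖(1 - α) • c‖ + ‖α • Q.mulVec v‖ := norm_add_le _ _
      _ ≤ (1 - α) * ‖c‖ + α * ‖v‖ := by
          rw [norm_smul, norm_smul, Real.norm_eq_abs, Real.norm_eq_abs,
            abs_of_pos (sub_pos.2 hα.2), abs_of_pos hα.1]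
          exact add_le_add_right (mul_le_mul_of_nonneg_left
            (stoch_mulVec_norm_le hQ0 hQ1 v) hα.1.le) _
  nlinarith [sub_pos.2 hα.2]

lemma v_nonneg (hS : 1 ≤ S) {Q : Matrix (Fin S) (Fin S) ℝ} {α : ℝ}
    (hα : α ∈ Set.Ioo (0:ℝ) 1)
    (hQ0 : ∀ i j, 0 ≤ Q i j) (hQ1 : ∀ i, ∑ j, Q i j = 1) {v c : Fin S → ℝ}
    (hc : ∀ s, 0 ≤ c s)
    (hfix : (1 - α • Q).mulVec v = (1 - α) • c) : ∀ s, 0 ≤ v s := by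
  have : Nonempty (Fin S) := ⟨⟨0, hS⟩⟩
  obtain ⟨s0, hs0⟩ := Finite.exists_min v
  have h := congrFun (v_fixed_point hfix) s0
  have hQv : v s0 ≤ (Q.mulVec v) s0 := by
    have : ∑ j, Q s0 j * v s0 ≤ ∑ j, Q s0 j * v j :=
      Finset.sum_le_sum fun j _ => mul_le_mul_of_nonneg_left (hs0 j) (hQ0 s0 j)
    simpa [Matrix.mulVec, dotProduct, ← Finset.sum_mul, hQ1 s0] using this
  have hv0 : 0 ≤ v s0 := by
    simp only [Pi.add_apply, Pi.smul_apply, smul_eq_mul] at h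
    nlinarith [hc s0, sub_pos.2 hα.2, hα.1]
  exact fun s => hv0.trans (hs0 s)

end VBounds

section Mgf
variable {Ω : Type*} [MeasurableSpace Ω]

lemma mgf_le_of_bounded_centered (μ : Measure Ω) [IsProbabilityMeasure μ]
    (X : Ω → ℝ) (M l : ℝ) (hM : 0 < M) (hX : Measurable X)
    (hbd : ∀ ω, |X ω| ≤ M) (hmean : ∫ ω, X ω ∂μ = 0) :
    mgf X μ l ≤ Real.exp (l ^ 2 * M ^ 2 / 2) := by
  set a : ℝ := (Real.exp (l * M) - Real.exp (-(l * M))) / (2 * M) with ha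
  set b : ℝ := (Real.exp (l * M) + Real.exp (-(l * M))) / 2 with hb
  have hpt : ∀ ω, Real.exp (l * X ω) ≤ a * X ω + b := by
    intro ω
    have hx := hbd ω
    have hθ : 0 ≤ (M - X ω) / (2 * M) := by
      apply div_nonneg _ (by linarith)
      cases abs_le.1 hx; linarith
    have hκ : 0 ≤ (M + X ω) / (2 * M) := by
      apply div_nonneg _ (by linarith)
      cases abs_le.1 hx; linarith
    have hsum : (M - X ω) / (2 * M) + (M + X ω) / (2 * M) = 1 := by
      field_simp; ring
    have hcvx := convexOn_exp.2 (Set.mem_univ (-(l * M))) (Set.mem_univ (l * M))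
      hθ hκ hsum
    simp only [smul_eq_mul] at hcvx
    have harg : (M - X ω) / (2 * M) * (-(l * M)) + (M + X ω) / (2 * M) * (l * M)
        = l * X ω := by
      field_simp
      ring
    rw [harg] at hcvx
    refine hcvx.trans_eq ?_
    simp only [ha, hb]
    field_simp
    ring
  have hXint : Integrable X μ := by
    refine (integrable_const M).mono' hX.aestronglyMeasurable ?_
    exact Filter.Eventually.of_forall fun ω => by
      simpa [Real.norm_eq_abs] using hbd ω
  have hExpint : Integrable (fun ω => Real.exp (l * X ω)) μ := by
    refine (integrable_const (Real.exp (|l| * M))).mono'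
      ((hX.const_mul l).exp).aestronglyMeasurable ?_
    refine Filter.Eventually.of_forall fun ω => ?_
    rw [Real.norm_eq_abs, abs_of_pos (Real.exp_pos _), Real.exp_le_exp]
    calc l * X ω ≤ |l * X ω| := le_abs_self _
      _ = |l| * |X ω| := abs_mul _ _
      _ ≤ |l| * M := mul_le_mul_of_nonneg_left (hbd ω) (abs_nonneg l)
  have hint : ∫ ω, (a * X ω + b) ∂μ = b := by
    rw [integral_add (hXint.const_mul a) (integrable_const b),
      integral_const_mul, hmean, integral_const]
    simp
  have h1 : mgf X μ l ≤ b := by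
    rw [mgf, ← hint]
    exact integral_mono hExpint ((hXint.const_mul a).add (integrable_const b)) hpt
  refine h1.trans ?_
  have : b = Real.cosh (l * M) := by rw [Real.cosh_eq, hb]
  rw [this]
  calc Real.cosh (l * M) ≤ Real.exp ((l * M) ^ 2 / 2) := Real.cosh_le_exp_half_sq _
    _ = Real.exp (l ^ 2 * M ^ 2 / 2) := by ring_nf

end Mgf

section Chernoff
variable {Ω : Type*} [MeasurableSpace Ω]

lemma mgf_sum_le (μ : Measure Ω) [IsProbabilityMeasure μ] {ι : Type*}
    (X : ι → Ω → ℝ)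
    (hindep : iIndepFun X μ) (hmeas : ∀ i, Measurable (X i))
    (M : ℝ) (hM : 0 < M) (hbd : ∀ i ω, |X i ω| ≤ M) (hmean : ∀ i, ∫ ω, X i ω ∂μ = 0)
    (s : Finset ι) (l : ℝ) :
    mgf (∑ i ∈ s, X i) μ l ≤ Real.exp ((s.card : ℝ) * (l ^ 2 * M ^ 2 / 2)) := by
  rw [hindep.mgf_sum hmeas s]
  calc ∏ i ∈ s, mgf (X i) μ l ≤ ∏ i ∈ s, Real.exp (l ^ 2 * M ^ 2 / 2) := by
        refine Finset.prod_le_prod (fun i _ => mgf_nonneg) fun i _ =>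
          mgf_le_of_bounded_centered μ (X i) M l hM (hmeas i) (hbd i) (hmean i)
    _ = Real.exp ((s.card : ℝ) * (l ^ 2 * M ^ 2 / 2)) := by
        rw [Finset.prod_const, ← Real.exp_nat_mul]

lemma two_sided_tail (μ : Measure Ω) [IsProbabilityMeasure μ] {ι : Type*}
    (X : ι → Ω → ℝ)
    (hindep : iIndepFun X μ) (hmeas : ∀ i, Measurable (X i))
    (M : ℝ) (hM : 0 < M) (hbd : ∀ i ω, |X i ω| ≤ M) (hmean : ∀ i, ∫ ω, X i ω ∂μ = 0)
    (s : Finset ι) (r : ℝ) (hr : 0 < r) :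
    μ {ω | (s.card : ℝ) * r ≤ |(∑ i ∈ s, X i) ω|}
      ≤ ENNReal.ofReal (2 * Real.exp (-((s.card : ℝ) * r ^ 2 / (2 * M ^ 2)))) := by
  set N : ℝ := (s.card : ℝ) with hN
  have hN0 : 0 ≤ N := Nat.cast_nonneg _
  set l : ℝ := r / M ^ 2 with hl
  have hl0 : 0 ≤ l := div_nonneg hr.le (by positivity)
  have hintX : ∀ (t : ℝ) (i : ι), i ∈ s →
      Integrable (fun ω => Real.exp (t * X i ω)) μ := by
    intro t i _
    refine (integrable_const (Real.exp (|t| * M))).mono'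
      (((hmeas i).const_mul t).exp).aestronglyMeasurable ?_
    refine Filter.Eventually.of_forall fun ω => ?_
    rw [Real.norm_eq_abs, abs_of_pos (Real.exp_pos _), Real.exp_le_exp]
    calc t * X i ω ≤ |t * X i ω| := le_abs_self _
      _ = |t| * |X i ω| := abs_mul _ _
      _ ≤ |t| * M := mul_le_mul_of_nonneg_left (hbd i ω) (abs_nonneg t)
  have hintT : ∀ t : ℝ, Integrable (fun ω => Real.exp (t * (∑ i ∈ s, X i) ω)) μ :=
    fun t => hindep.integrable_exp_mul_sum hmeas (fun i hi => hintX t i hi)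
  have hexp : -l * (N * r) + N * (l ^ 2 * M ^ 2 / 2) = -(N * r ^ 2 / (2 * M ^ 2)) := by
    rw [hl]; field_simp; ring
  have hup : (μ {ω | N * r ≤ (∑ i ∈ s, X i) ω}).toReal
      ≤ Real.exp (-(N * r ^ 2 / (2 * M ^ 2))) := by
    calc (μ {ω | N * r ≤ (∑ i ∈ s, X i) ω}).toReal
        ≤ Real.exp (-l * (N * r)) * mgf (∑ i ∈ s, X i) μ l :=
          measure_ge_le_exp_mul_mgf (N * r) hl0 (hintT l)
      _ ≤ Real.exp (-l * (N * r)) * Real.exp (N * (l ^ 2 * M ^ 2 / 2)) := by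
          exact mul_le_mul_of_nonneg_left
            (mgf_sum_le μ X hindep hmeas M hM hbd hmean s l) (Real.exp_pos _).le
      _ = Real.exp (-(N * r ^ 2 / (2 * M ^ 2))) := by rw [← Real.exp_add, hexp]
  have hlo : (μ {ω | (∑ i ∈ s, X i) ω ≤ -(N * r)}).toReal
      ≤ Real.exp (-(N * r ^ 2 / (2 * M ^ 2))) := by
    calc (μ {ω | (∑ i ∈ s, X i) ω ≤ -(N * r)}).toReal
        ≤ Real.exp (-(-l) * -(N * r)) * mgf (∑ i ∈ s, X i) μ (-l) :=
          measure_le_le_exp_mul_mgf (-(N * r)) (neg_nonpos.2 hl0) (hintT (-l))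
      _ ≤ Real.exp (-l * (N * r)) * Real.exp (N * ((-l) ^ 2 * M ^ 2 / 2)) := by
          rw [show -(-l) * -(N * r) = -l * (N * r) by ring]
          exact mul_le_mul_of_nonneg_left
            (mgf_sum_le μ X hindep hmeas M hM hbd hmean s (-l)) (Real.exp_pos _).le
      _ = Real.exp (-(N * r ^ 2 / (2 * M ^ 2))) := by
          rw [← Real.exp_add, ← hexp]; ring_nf
  have hsub : {ω | N * r ≤ |(∑ i ∈ s, X i) ω|}
      ⊆ {ω | N * r ≤ (∑ i ∈ s, X i) ω} ∪ {ω | (∑ i ∈ s, X i) ω ≤ -(N * r)} := by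
    intro ω hω
    rcases le_abs.1 (Set.mem_setOf_eq ▸ hω) with h | h
    · exact Or.inl h
    · refine Or.inr ?_
      simp only [Set.mem_setOf_eq] at h ⊢
      linarith
  calc μ {ω | N * r ≤ |(∑ i ∈ s, X i) ω|}
      ≤ μ ({ω | N * r ≤ (∑ i ∈ s, X i) ω} ∪ {ω | (∑ i ∈ s, X i) ω ≤ -(N * r)}) :=
        measure_mono hsub
    _ ≤ μ {ω | N * r ≤ (∑ i ∈ s, X i) ω} + μ {ω | (∑ i ∈ s, X i) ω ≤ -(N * r)} :=
        measure_union_le _ _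
    _ ≤ ENNReal.ofReal (Real.exp (-(N * r ^ 2 / (2 * M ^ 2))))
        + ENNReal.ofReal (Real.exp (-(N * r ^ 2 / (2 * M ^ 2)))) := by
        gcongr
        · rw [← ENNReal.ofReal_toReal (measure_ne_top μ _)]
          exact ENNReal.ofReal_le_ofReal hup
        · rw [← ENNReal.ofReal_toReal (measure_ne_top μ _)]
          exact ENNReal.ofReal_le_ofReal hlo
    _ = ENNReal.ofReal (2 * Real.exp (-(N * r ^ 2 / (2 * M ^ 2)))) := by
        rw [← ENNReal.ofReal_add (Real.exp_pos _).le (Real.exp_pos _).le]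
        ring_nf

end Chernoff

/-- Plug-in accuracy guarantee (core of Theorem 1 of the paper).
For row-stochastic `Q`, `α ∈ (0,1)`, nonnegative `c` with `‖c‖_∞ > 0`,
`v = (1-α)(I-αQ)⁻¹ c`, `ε ∈ (0, 4‖c‖_∞)`, `δ ∈ (0,1)`, and i.i.d. samples
`Y_{s,1},…,Y_{s,n} ~ Q(s,·)` (independent across all pairs `(s,i)`), let
`Q̃(s,s') = (1/n) Σ_i 1(Y_{s,i} = s')` and `ṽ = (1-α)(I-αQ̃)⁻¹ c`. If
`n ≥ (2‖c‖_∞²α²/(ε²(1-α)²)) log((2S/δ)⌈log(4‖c‖_∞/ε)/(1-α)⌉)`, then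
`ℙ(‖ṽ - v‖_∞ ≥ ε) ≤ δ`. -/
theorem backward_epe_plugin_accuracy
    (S : ℕ) (hS : 1 ≤ S) (Q : Matrix (Fin S) (Fin S) ℝ)
    (hQnonneg : ∀ i j, 0 ≤ Q i j) (hQrow : ∀ i, ∑ j, Q i j = 1)
    (α : ℝ) (hα : α ∈ Set.Ioo (0 : ℝ) 1)
    (c : Fin S → ℝ) (hc : ∀ s, 0 ≤ c s) (hcpos : 0 < ‖c‖)
    (v : Fin S → ℝ) (hv : v = (1 - α) • ((1 - α • Q)⁻¹).mulVec c)
    (ε δ : ℝ) (hε : ε ∈ Set.Ioo 0 (4 * ‖c‖)) (hδ : δ ∈ Set.Ioo (0 : ℝ) 1)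
    (Ω : Type*) [MeasurableSpace Ω] (Pr : Measure Ω) [IsProbabilityMeasure Pr]
    (n : ℕ) (Y : Fin S → Fin n → Ω → Fin S)
    (hYmeas : ∀ s i, Measurable (Y s i))
    (hYdist : ∀ s i s', Pr {ω | Y s i ω = s'} = ENNReal.ofReal (Q s s'))
    (hYindep : iIndepFun
      (fun p : Fin S × Fin n => Y p.1 p.2) Pr)
    (Qtilde : Ω → Matrix (Fin S) (Fin S) ℝ)
    (hQtilde : ∀ ω s s',
      Qtilde ω s s' = (∑ i, if Y s i ω = s' then (1 : ℝ) else 0) / n)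
    (vtilde : Ω → Fin S → ℝ)
    (hvtilde : ∀ ω, vtilde ω = (1 - α) • ((1 - α • Qtilde ω)⁻¹).mulVec c)
    (hn : (n : ℝ) ≥ 2 * ‖c‖ ^ 2 * α ^ 2 / (ε ^ 2 * (1 - α) ^ 2)
      * Real.log ((2 * S / δ)
          * (⌈Real.log (4 * ‖c‖ / ε) / (1 - α)⌉₊ : ℝ))) :
    Pr {ω | ε ≤ ‖vtilde ω - v‖} ≤ ENNReal.ofReal δ := by
  obtain ⟨hα0, hα1⟩ := hα
  obtain ⟨hε0, hε4⟩ := hε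
  obtain ⟨hδ0, hδ1⟩ := hδ
  have h1α : (0:ℝ) < 1 - α := sub_pos.2 hα1
  -- basic quantities
  set t : ℝ := ε * (1 - α) / α with ht_def
  have ht0 : 0 < t := by positivity
  set C : ℝ := 2 * ‖c‖ ^ 2 * α ^ 2 / (ε ^ 2 * (1 - α) ^ 2) with hC_def
  have hC0 : 0 < C := by positivity
  -- the ceiling factor is at least 1
  have hK1 : (1:ℝ) ≤ (⌈Real.log (4 * ‖c‖ / ε) / (1 - α)⌉₊ : ℝ) := by
    have hlogpos : 0 < Real.log (4 * ‖c‖ / ε) :=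
      Real.log_pos ((one_lt_div hε0).2 hε4)
    exact_mod_cast Nat.one_le_ceil_iff.2 (by positivity)
  have h2S1 : (1:ℝ) < 2 * S / δ := by
    rw [lt_div_iff₀ hδ0]
    have : (1:ℝ) ≤ (S:ℝ) := by exact_mod_cast hS
    nlinarith
  have h2S0 : (0:ℝ) < 2 * S / δ := lt_trans one_pos h2S1
  have hnC : (n:ℝ) ≥ C * Real.log (2 * S / δ) := by
    refine le_trans ?_ hn
    refine mul_le_mul_of_nonneg_left ?_ hC0.le
    exact Real.log_le_log h2S0 (le_mul_of_one_le_right h2S0.le hK1)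
  have hnpos : 0 < n := by
    by_contra h
    push_neg at h
    interval_cases n
    have hlogpos : 0 < Real.log (2 * S / δ) := Real.log_pos h2S1
    have : (0:ℝ) < C * Real.log (2 * S / δ) := mul_pos hC0 hlogpos
    simp only [Nat.cast_zero] at hnC
    linarith
  have hnR : (0:ℝ) < n := by exact_mod_cast hnpos
  -- key exponential bound
  have hCt : C * (t ^ 2 / (2 * ‖c‖ ^ 2)) = 1 := by
    rw [hC_def, ht_def]
    field_simp
  have hexp_le : Real.exp (-((n:ℝ) * t ^ 2 / (2 * ‖c‖ ^ 2))) ≤ δ / (2 * S) := by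
    have h1 : Real.log (2 * S / δ) ≤ (n:ℝ) * (t ^ 2 / (2 * ‖c‖ ^ 2)) := by
      have := mul_le_mul_of_nonneg_right hnC (le_of_lt (by positivity :
        (0:ℝ) < t ^ 2 / (2 * ‖c‖ ^ 2)))
      calc Real.log (2 * S / δ)
          = C * Real.log (2 * S / δ) * (t ^ 2 / (2 * ‖c‖ ^ 2)) := by
            rw [mul_comm C, mul_assoc, hCt, mul_one]
        _ ≤ (n:ℝ) * (t ^ 2 / (2 * ‖c‖ ^ 2)) := this
    calc Real.exp (-((n:ℝ) * t ^ 2 / (2 * ‖c‖ ^ 2)))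
        ≤ Real.exp (-Real.log (2 * S / δ)) := by
          rw [Real.exp_le_exp, neg_le_neg_iff]
          calc Real.log (2 * S / δ) ≤ (n:ℝ) * (t ^ 2 / (2 * ‖c‖ ^ 2)) := h1
            _ = (n:ℝ) * t ^ 2 / (2 * ‖c‖ ^ 2) := by ring
      _ = δ / (2 * S) := by
          rw [Real.exp_neg, Real.exp_log h2S0, inv_div]
  -- deterministic facts about v
  have hfix : (1 - α • Q).mulVec v = (1 - α) • c := by
    rw [hv]; exact mulVec_value ⟨hα0, hα1⟩ hQnonneg hQrow c
  have hvnorm : ‖v‖ ≤ ‖c‖ := v_norm_le ⟨hα0, hα1⟩ hQnonneg hQrow hfix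
  have hv0 : ∀ s, 0 ≤ v s := v_nonneg hS ⟨hα0, hα1⟩ hQnonneg hQrow hc hfix
  have hvle : ∀ s, v s ≤ ‖c‖ := fun s =>
    le_trans (le_trans (le_abs_self _) (by simpa using norm_le_pi_norm v s)) hvnorm
  set m : Fin S → ℝ := Q.mulVec v with hm_def
  have hm0 : ∀ s, 0 ≤ m s := by
    intro s
    simp only [hm_def, Matrix.mulVec, dotProduct]
    exact Finset.sum_nonneg fun j _ => mul_nonneg (hQnonneg s j) (hv0 j)
  have hmle : ∀ s, m s ≤ ‖c‖ := fun s =>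
    le_trans (le_trans (le_abs_self _) (by simpa using norm_le_pi_norm m s))
      (le_trans (stoch_mulVec_norm_le hQnonneg hQrow v) hvnorm)
  -- the centered sampled family
  set W : Fin S × Fin n → Ω → ℝ := fun p ω => v (Y p.1 p.2 ω) - m p.1 with hW_def
  have hWmeas : ∀ p, Measurable (W p) := fun p =>
    ((measurable_of_countable v).comp (hYmeas p.1 p.2)).sub measurable_const
  have hWindep : iIndepFun W Pr := by
    have := hYindep.comp (fun p : Fin S × Fin n => fun y : Fin S => v y - m p.1)
      (fun p => measurable_of_countable _)
    exact this
  have hWbd : ∀ p ω, |W p ω| ≤ ‖c‖ := by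
    intro p ω
    rw [abs_le]
    constructor
    · have := hmle p.1; have := hv0 (Y p.1 p.2 ω); simp only [hW_def]; linarith
    · have := hm0 p.1; have := hvle (Y p.1 p.2 ω); simp only [hW_def]; linarith
  have hYint : ∀ s i, Integrable (fun ω => v (Y s i ω)) Pr := by
    intro s i
    refine (integrable_const ‖c‖).mono'
      ((measurable_of_countable v).comp (hYmeas s i)).aestronglyMeasurable ?_
    refine Filter.Eventually.of_forall fun ω => ?_
    rw [Real.norm_eq_abs, abs_of_nonneg (hv0 _)]
    exact hvle _
  have hmeasset : ∀ s i s', MeasurableSet {ω' | Y s i ω' = s'} := fun s i s' =>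
    hYmeas s i (measurableSet_singleton s')
  have hYmean : ∀ s i, ∫ ω, v (Y s i ω) ∂Pr = m s := by
    intro s i
    have hfun : (fun ω => v (Y s i ω))
        = fun ω => ∑ s', Set.indicator {ω' | Y s i ω' = s'} (fun _ => v s') ω := by
      funext ω
      simp only [Set.indicator_apply, Set.mem_setOf_eq]
      rw [Finset.sum_ite_eq]
      simp
    rw [hfun, integral_finset_sum _
      (fun s' _ => (integrable_const (v s')).indicator (hmeasset s i s'))]
    have : ∀ s', ∫ ω, Set.indicator {ω' | Y s i ω' = s'} (fun _ => v s') ω ∂Pr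
        = Q s s' * v s' := by
      intro s'
      rw [integral_indicator_const (v s') (hmeasset s i s'), measureReal_def, hYdist s i s',
        ENNReal.toReal_ofReal (hQnonneg s s'), smul_eq_mul]
    rw [Finset.sum_congr rfl fun s' _ => this s']
    simp [hm_def, Matrix.mulVec, dotProduct]
  have hWmean : ∀ p, ∫ ω, W p ω ∂Pr = 0 := by
    intro p
    simp only [hW_def]
    rw [integral_sub (hYint p.1 p.2) (integrable_const _), hYmean p.1 p.2,
      integral_const]
    simp
  -- per-state sums
  set T : Fin S → Ω → ℝ := fun s => ∑ p ∈ ({s} ×ˢ (Finset.univ : Finset (Fin n))), W p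
    with hT_def
  have hTapply : ∀ s ω, T s ω = ∑ i, (v (Y s i ω) - m s) := by
    intro s ω
    simp only [hT_def, Finset.sum_apply]
    rw [Finset.sum_product, Finset.sum_singleton]
  -- tail bound per state
  have htail : ∀ s : Fin S, Pr {ω | (n:ℝ) * t ≤ |T s ω|}
      ≤ ENNReal.ofReal (2 * Real.exp (-((n:ℝ) * t ^ 2 / (2 * ‖c‖ ^ 2)))) := by
    intro s
    have hcard : ((({s} ×ˢ (Finset.univ : Finset (Fin n))).card : ℝ)) = (n:ℝ) := by
      simp
    have := two_sided_tail Pr W hWindep hWmeas ‖c‖ hcpos hWbd hWmean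
      ({s} ×ˢ (Finset.univ : Finset (Fin n))) t ht0
    rw [hcard] at this
    exact this
  -- event inclusion
  have hsub : {ω | ε ≤ ‖vtilde ω - v‖} ⊆ ⋃ s : Fin S, {ω | (n:ℝ) * t ≤ |T s ω|} := by
    intro ω hω
    simp only [Set.mem_setOf_eq] at hω
    -- Qtilde is row stochastic
    have hQt0 : ∀ i j, 0 ≤ Qtilde ω i j := by
      intro i j
      rw [hQtilde]
      apply div_nonneg _ (Nat.cast_nonneg n)
      exact Finset.sum_nonneg fun i' _ => by positivity
    have hQt1 : ∀ i, ∑ j, Qtilde ω i j = 1 := by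
      intro i
      simp only [hQtilde]
      rw [← Finset.sum_div]
      rw [Finset.sum_comm]
      have : ∀ i' : Fin n, ∑ j, (if Y i i' ω = j then (1:ℝ) else 0) = 1 := by
        intro i'
        rw [Finset.sum_ite_eq]
        simp
      rw [Finset.sum_congr rfl fun i' _ => this i']
      rw [Finset.sum_const, Finset.card_univ, Fintype.card_fin, nsmul_eq_mul, mul_one]
      field_simp
    -- fixed point for vtilde
    have hfixt : (1 - α • Qtilde ω).mulVec (vtilde ω) = (1 - α) • c := by
      rw [hvtilde]; exact mulVec_value ⟨hα0, hα1⟩ hQt0 hQt1 c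
    -- error identity
    have hid : (1 - α • Qtilde ω).mulVec (vtilde ω - v)
        = α • ((Qtilde ω - Q).mulVec v) := by
      rw [Matrix.mulVec_sub, hfixt, ← hfix, ← Matrix.sub_mulVec]
      have : (1 - α • Q) - (1 - α • Qtilde ω) = α • (Qtilde ω - Q) := by
        rw [smul_sub]; abel
      rw [this, Matrix.smul_mulVec]
    -- norm lower bound
    have hlow : (1 - α) * ε ≤ α * ‖(Qtilde ω - Q).mulVec v‖ := by
      calc (1 - α) * ε ≤ (1 - α) * ‖vtilde ω - v‖ :=
            mul_le_mul_of_nonneg_left hω h1α.le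
        _ ≤ ‖(1 - α • Qtilde ω).mulVec (vtilde ω - v)‖ :=
            one_sub_smul_lower ⟨hα0, hα1⟩ hQt0 hQt1 _
        _ = α * ‖(Qtilde ω - Q).mulVec v‖ := by
            rw [hid, norm_smul, Real.norm_eq_abs, abs_of_pos hα0]
    have hnorm_t : t ≤ ‖(Qtilde ω - Q).mulVec v‖ := by
      rw [ht_def, div_le_iff₀ hα0]
      linarith [hlow]
    obtain ⟨s, hs⟩ := pi_exists_max hS ((Qtilde ω - Q).mulVec v)
    have hst : t ≤ |((Qtilde ω - Q).mulVec v) s| := le_trans hnorm_t hs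
    -- identify the coordinate with T s / n
    have hcoord : ((Qtilde ω - Q).mulVec v) s = T s ω / n := by
      have hQtv : ((Qtilde ω).mulVec v) s = (∑ i, v (Y s i ω)) / n := by
        simp only [Matrix.mulVec, dotProduct, hQtilde, div_mul_eq_mul_div,
          Finset.sum_mul, ite_mul, one_mul, zero_mul]
        rw [← Finset.sum_div]
        congr 1
        rw [Finset.sum_comm]
        refine Finset.sum_congr rfl fun i _ => ?_
        rw [Finset.sum_ite_eq]
        simp
      rw [Matrix.sub_mulVec, hTapply, Pi.sub_apply, hQtv,
        Finset.sum_sub_distrib, Finset.sum_const, Finset.card_univ,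
        Fintype.card_fin, nsmul_eq_mul]
      field_simp
      rfl
    refine Set.mem_iUnion.2 ⟨s, ?_⟩
    simp only [Set.mem_setOf_eq]
    have : |T s ω| = (n:ℝ) * |((Qtilde ω - Q).mulVec v) s| := by
      rw [hcoord, abs_div, Nat.abs_cast]
      field_simp
    rw [this]
    exact mul_le_mul_of_nonneg_left hst hnR.le
  -- union bound and conclusion
  calc Pr {ω | ε ≤ ‖vtilde ω - v‖}
      ≤ Pr (⋃ s : Fin S, {ω | (n:ℝ) * t ≤ |T s ω|}) := measure_mono hsub
    _ ≤ ∑' s : Fin S, Pr {ω | (n:ℝ) * t ≤ |T s ω|} := measure_iUnion_le _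
    _ ≤ ∑' s : Fin S,
        ENNReal.ofReal (2 * Real.exp (-((n:ℝ) * t ^ 2 / (2 * ‖c‖ ^ 2)))) :=
        ENNReal.tsum_le_tsum fun s => htail s
    _ = (S : ENNReal) * ENNReal.ofReal (2 * Real.exp (-((n:ℝ) * t ^ 2 / (2 * ‖c‖ ^ 2)))) := by
        rw [tsum_fintype]
        simp [Finset.sum_const, Finset.card_univ, nsmul_eq_mul]
    _ ≤ ENNReal.ofReal δ := by
        rw [show ((S : ENNReal)) = ENNReal.ofReal (S : ℝ) by
          rw [ENNReal.ofReal_natCast],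
          ← ENNReal.ofReal_mul (Nat.cast_nonneg S)]
        apply ENNReal.ofReal_le_ofReal
        have hSpos : (0:ℝ) < S := by exact_mod_cast hS
        calc (S:ℝ) * (2 * Real.exp (-((n:ℝ) * t ^ 2 / (2 * ‖c‖ ^ 2))))
            ≤ (S:ℝ) * (2 * (δ / (2 * S))) := by
              refine mul_le_mul_of_nonneg_left ?_ hSpos.le
              exact mul_le_mul_of_nonneg_left hexp_le (by norm_num)
          _ = δ := by field_simp
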